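/- Let X = S₁ ∪ S₂ ⊂ ℂ, where S_r = {r·e^{iθ} : 0 ≤ θ ≤ 2π} is the circle of radius r centered at the origin (r = 1,2), and let α ∈ ℝ be an irrational multiple of 2π. Define continuous maps f₁, f₂ : X → X by: f₁(r·e^{iθ}) = 2·e^{i(θ+α)} if r = 1 and f₁(r·e^{iθ}) = e^{i(θ+2α)} if r = 2; f₂(r·e^{iθ}) = 2·e^{i(θ+2α)} if r = 1 and f₂(r·e^{iθ}) = e^{i(θ+α)} if r = 2. Then the non-autonomous system (X,{f₁,f₂}) is minimal (every point x∈X has dense orbit {ω_n(x) : n∈ℕ}), but the autonomous system (X, f₂∘f₁) is not minimal. -/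

import Mathlib

open Filter Metric Set Function

/-- The `n`-th iterate `ω_n` of the non-autonomous system generated by the finite family
`f 0, f 1, …, f k` applied cyclically: `ω_0 = id` and `ω_{n+1} = f (n % (k+1)) ∘ ω_n`,
so that `ω_n = f_{((n-1) mod (k+1)) + 1} ∘ ⋯ ∘ f_2 ∘ f_1` in the paper's (1-based) notation.
The induced autonomous map `f = f_k ∘ ⋯ ∘ f_1` is `omegaIt f (k+1)`. -/
def omegaIt {X : Type*} {k : ℕ} (f : Fin (k + 1) → X → X) : ℕ → X → X
  | 0 => id
  | n + 1 => fun x => f ⟨n % (k + 1), Nat.mod_lt _ (Nat.succ_pos k)⟩ (omegaIt f n x)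

/-- The subset `S₁ ∪ S₂` of ℂ: the union of the circles of radius 1 and 2 about 0. -/
def TwoCircles : Set ℂ := {z : ℂ | ‖z‖ = 1 ∨ ‖z‖ = 2}

/-- `f₁`: on the unit circle, `r·e^{iθ} ↦ 2·e^{i(θ+α)}`; on the circle of radius 2,
`r·e^{iθ} ↦ e^{i(θ+2α)}`. -/
noncomputable def F1 (α : ℝ) (z : TwoCircles) : TwoCircles :=
  if h : ‖z.1‖ = 1 then
    ⟨2 * z.1 * Complex.exp ((α : ℂ) * Complex.I), Or.inr (by
      simp [map_mul, Complex.norm_exp_ofReal_mul_I, Complex.norm_exp, h])⟩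
  else
    ⟨z.1 / 2 * Complex.exp (((2 * α : ℝ) : ℂ) * Complex.I), Or.inl (by
      have h2 : ‖z.1‖ = 2 := z.2.resolve_left h
      simp [map_mul, map_div₀, Complex.norm_exp_ofReal_mul_I, Complex.norm_exp, h2])⟩

/-- `f₂`: on the unit circle, `r·e^{iθ} ↦ 2·e^{i(θ+2α)}`; on the circle of radius 2,
`r·e^{iθ} ↦ e^{i(θ+α)}`. -/
noncomputable def F2 (α : ℝ) (z : TwoCircles) : TwoCircles :=
  if h : ‖z.1‖ = 1 then
    ⟨2 * z.1 * Complex.exp (((2 * α : ℝ) : ℂ) * Complex.I), Or.inr (by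
      simp [map_mul, Complex.norm_exp_ofReal_mul_I, Complex.norm_exp, h])⟩
  else
    ⟨z.1 / 2 * Complex.exp ((α : ℂ) * Complex.I), Or.inl (by
      have h2 : ‖z.1‖ = 2 := z.2.resolve_left h
      simp [map_mul, map_div₀, Complex.norm_exp_ofReal_mul_I, Complex.norm_exp, h2])⟩

/-! ### Auxiliary lemmas -/

/-- Density of the forward orbit of an irrational rotation on the unit circle. -/
lemma circle_key (β : ℝ) (hβ : Irrational (β / (2 * Real.pi)))
    (u : ℂ) (hu : ‖u‖ = 1) {ε : ℝ} (hε : 0 < ε) :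
    ∃ m : ℕ, ‖(Complex.exp ((β : ℂ) * Complex.I) ^ m - u)‖ < ε := by
  set H := AddSubgroup.closure {β, 2 * Real.pi} with hHdef
  have hHd : Dense (H : Set ℝ) := by
    rcases H.dense_or_cyclic with h | ⟨a, ha⟩
    · exact h
    · exfalso
      rw [← AddSubgroup.zmultiples_eq_closure] at ha
      have hβH : β ∈ H := AddSubgroup.subset_closure (by simp)
      have hπH : 2 * Real.pi ∈ H := AddSubgroup.subset_closure (by simp)
      rw [ha, AddSubgroup.mem_zmultiples_iff] at hβH hπH
      obtain ⟨m, hm⟩ := hβH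
      obtain ⟨n, hn⟩ := hπH
      have hπ0 : (2 * Real.pi) ≠ 0 := by positivity
      have ha0 : a ≠ 0 := by rintro rfl; rw [smul_zero] at hn; exact hπ0 hn.symm
      have hn0 : (n : ℝ) ≠ 0 := by
        rintro h; rw [zsmul_eq_mul, h, zero_mul] at hn; exact hπ0 hn.symm
      apply hβ
      refine ⟨(m : ℚ) / (n : ℚ), ?_⟩
      rw [← hm, ← hn]
      push_cast
      field_simp
      ring
  have himg : ∀ x ∈ H, ∃ m : ℤ, Circle.exp x = Circle.exp β ^ m := by
    intro x hx
    induction hx using AddSubgroup.closure_induction with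
    | mem y hy =>
      rcases hy with rfl | hy
      · exact ⟨1, (zpow_one _).symm⟩
      · simp at hy; exact ⟨0, by simp [hy]⟩
    | zero => exact ⟨0, by simp⟩
    | add x y hx hy ihx ihy =>
      obtain ⟨m, hm⟩ := ihx; obtain ⟨n, hn⟩ := ihy
      exact ⟨m + n, by rw [Circle.exp_add, hm, hn, zpow_add]⟩
    | neg x hx ih =>
      obtain ⟨m, hm⟩ := ih
      exact ⟨-m, by rw [Circle.exp_neg, hm, zpow_neg]⟩
  have hzd : Dense (Set.range fun m : ℤ => Circle.exp β ^ m) := by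
    have hsurj : Function.Surjective Circle.exp := fun z => ⟨Complex.arg z, Circle.exp_arg z⟩
    have : Dense (Circle.exp '' (H : Set ℝ)) :=
      hsurj.denseRange.dense_image Circle.exp.continuous hHd
    refine this.mono ?_
    rintro _ ⟨x, hx, rfl⟩
    obtain ⟨m, hm⟩ := himg x hx
    exact ⟨m, hm.symm⟩
  have hnd : Dense (Set.range fun m : ℕ => Circle.exp β ^ m) := by
    rw [Dense, ← closure_range_zpow_eq_pow] at *
    exact hzd
  have huC : u ∈ Metric.sphere (0 : ℂ) 1 := by
    simp [hu]
  obtain ⟨y, hy, n, rfl⟩ := Metric.dense_iff.mp hnd ⟨u, huC⟩ ε hε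
  refine ⟨n, ?_⟩
  have := Metric.mem_ball.mp hy
  change dist ((Circle.exp β ^ n : Circle) : ℂ) u < ε at this
  rw [← Complex.dist_eq]
  simpa [Circle.coe_exp, dist_comm] using this

/-- For any `c ≠ 0` and target `y` with `|c| = |y|`, some forward rotate of `c` is `ε`-close
to `y`. -/
lemma reach (β : ℝ) (hβ : Irrational (β / (2 * Real.pi))) (c y : ℂ)
    (habs : ‖c‖ = ‖y‖) (hc : c ≠ 0) {ε : ℝ} (hε : 0 < ε) :
    ∃ m : ℕ, ‖(c * Complex.exp ((β : ℂ) * Complex.I) ^ m - y)‖ < ε := by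
  have hc0 : ‖c‖ ≠ 0 := by simpa using hc
  have hcpos : 0 < ‖c‖ := lt_of_le_of_ne (by positivity) (Ne.symm hc0)
  have hu : ‖(y / c)‖ = 1 := by
    rw [norm_div, ← habs, div_self hc0]
  obtain ⟨m, hm⟩ := circle_key β hβ (y / c) hu (div_pos hε hcpos)
  refine ⟨m, ?_⟩
  have hkey : c * Complex.exp ((β : ℂ) * Complex.I) ^ m - y
      = c * (Complex.exp ((β : ℂ) * Complex.I) ^ m - y / c) := by
    field_simp
  rw [hkey, norm_mul]
  calc ‖c‖ * ‖(Complex.exp ((β : ℂ) * Complex.I) ^ m - y / c)‖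
      < ‖c‖ * (ε / ‖c‖) := by
        exact mul_lt_mul_of_pos_left hm hcpos
    _ = ε := by field_simp

lemma abs_exp_two (α : ℝ) : ‖(Complex.exp (2 * (α : ℂ) * Complex.I))‖ = 1 := by
  have := Complex.norm_exp_ofReal_mul_I (2 * α)
  push_cast at this
  exact this

lemma abs_exp_four (α : ℝ) : ‖(Complex.exp (4 * (α : ℂ) * Complex.I))‖ = 1 := by
  have := Complex.norm_exp_ofReal_mul_I (4 * α)
  push_cast at this
  exact this

lemma F1_val_one {α : ℝ} (z : TwoCircles) (h : ‖z.1‖ = 1) :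
    (F1 α z).1 = 2 * z.1 * Complex.exp ((α : ℂ) * Complex.I) := by
  rw [F1, dif_pos h]

lemma F1_val_two {α : ℝ} (z : TwoCircles) (h : ‖z.1‖ = 2) :
    (F1 α z).1 = z.1 / 2 * Complex.exp (((2 * α : ℝ) : ℂ) * Complex.I) := by
  rw [F1, dif_neg (by rw [h]; norm_num)]

lemma F2_val_one {α : ℝ} (z : TwoCircles) (h : ‖z.1‖ = 1) :
    (F2 α z).1 = 2 * z.1 * Complex.exp (((2 * α : ℝ) : ℂ) * Complex.I) := by
  rw [F2, dif_pos h]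

lemma F2_val_two {α : ℝ} (z : TwoCircles) (h : ‖z.1‖ = 2) :
    (F2 α z).1 = z.1 / 2 * Complex.exp ((α : ℂ) * Complex.I) := by
  rw [F2, dif_neg (by rw [h]; norm_num)]

lemma comp_val_one {α : ℝ} (z : TwoCircles) (h : ‖z.1‖ = 1) :
    (F2 α (F1 α z)).1 = z.1 * Complex.exp (((2 * α : ℝ) : ℂ) * Complex.I) := by
  have h1 : ‖(F1 α z).1‖ = 2 := by
    rw [F1_val_one z h]
    simp [map_mul, Complex.norm_exp_ofReal_mul_I, Complex.norm_exp, h]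
  have he : Complex.exp ((α : ℂ) * Complex.I) * Complex.exp ((α : ℂ) * Complex.I)
      = Complex.exp (((2 * α : ℝ) : ℂ) * Complex.I) := by
    rw [← Complex.exp_add]; push_cast; ring_nf
  rw [F2_val_two _ h1, F1_val_one z h]
  calc 2 * z.1 * Complex.exp ((α : ℂ) * Complex.I) / 2 * Complex.exp ((α : ℂ) * Complex.I)
      = z.1 * (Complex.exp ((α : ℂ) * Complex.I) * Complex.exp ((α : ℂ) * Complex.I)) := by ring
    _ = z.1 * Complex.exp (((2 * α : ℝ) : ℂ) * Complex.I) := by rw [he]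

lemma comp_val_two {α : ℝ} (z : TwoCircles) (h : ‖z.1‖ = 2) :
    (F2 α (F1 α z)).1 = z.1 * Complex.exp (((4 * α : ℝ) : ℂ) * Complex.I) := by
  have h1 : ‖(F1 α z).1‖ = 1 := by
    rw [F1_val_two z h]
    simp [map_mul, map_div₀, Complex.norm_exp_ofReal_mul_I, Complex.norm_exp, h]
  have he : Complex.exp (((2 * α : ℝ) : ℂ) * Complex.I)
        * Complex.exp (((2 * α : ℝ) : ℂ) * Complex.I)
      = Complex.exp (((4 * α : ℝ) : ℂ) * Complex.I) := by
    rw [← Complex.exp_add]; push_cast; ring_nf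
  rw [F2_val_one _ h1, F1_val_two z h]
  calc 2 * (z.1 / 2 * Complex.exp (((2 * α : ℝ) : ℂ) * Complex.I))
        * Complex.exp (((2 * α : ℝ) : ℂ) * Complex.I)
      = z.1 * (Complex.exp (((2 * α : ℝ) : ℂ) * Complex.I)
        * Complex.exp (((2 * α : ℝ) : ℂ) * Complex.I)) := by ring
    _ = z.1 * Complex.exp (((4 * α : ℝ) : ℂ) * Complex.I) := by rw [he]

lemma omega_odd {X : Type*} (f g : X → X) (m : ℕ) (x : X) :
    omegaIt ![f, g] (2 * m + 1) x = f (omegaIt ![f, g] (2 * m) x) := by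
  show ![f, g] ⟨2 * m % 2, _⟩ _ = _
  have e0 : 2 * m % 2 = 0 := by omega
  simp only [e0]; rfl

lemma omega_even_succ {X : Type*} (f g : X → X) (m : ℕ) (x : X) :
    omegaIt ![f, g] (2 * m + 2) x = g (f (omegaIt ![f, g] (2 * m) x)) := by
  show ![f, g] ⟨(2 * m + 1) % 2, _⟩ (omegaIt ![f, g] (2 * m + 1) x) = _
  rw [omega_odd]
  have e1 : (2 * m + 1) % 2 = 1 := by omega
  simp only [e1]; rfl

lemma omega_even_one {α : ℝ} (x : TwoCircles) (hx : ‖x.1‖ = 1) (m : ℕ) :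
    (omegaIt ![F1 α, F2 α] (2 * m) x).1
      = x.1 * Complex.exp (((2 * α : ℝ) : ℂ) * Complex.I) ^ m := by
  induction m with
  | zero => simp [omegaIt]
  | succ m ih =>
    have habs : ‖(omegaIt ![F1 α, F2 α] (2 * m) x).1‖ = 1 := by
      rw [ih]; simp [map_mul, map_pow, Complex.norm_exp_ofReal_mul_I, abs_exp_two, abs_exp_four, hx]
    have h2 : 2 * (m + 1) = 2 * m + 2 := by ring
    rw [h2, omega_even_succ, comp_val_one _ habs, ih, pow_succ]
    ring

lemma omega_even_two {α : ℝ} (x : TwoCircles) (hx : ‖x.1‖ = 2) (m : ℕ) :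
    (omegaIt ![F1 α, F2 α] (2 * m) x).1
      = x.1 * Complex.exp (((4 * α : ℝ) : ℂ) * Complex.I) ^ m := by
  induction m with
  | zero => simp [omegaIt]
  | succ m ih =>
    have habs : ‖(omegaIt ![F1 α, F2 α] (2 * m) x).1‖ = 2 := by
      rw [ih]; simp [map_mul, map_pow, Complex.norm_exp_ofReal_mul_I, abs_exp_two, abs_exp_four, hx]
    have h2 : 2 * (m + 1) = 2 * m + 2 := by ring
    rw [h2, omega_even_succ, comp_val_two _ habs, ih, pow_succ]
    ring

lemma frontier_unit_empty :
    frontier {z : TwoCircles | ‖z.1‖ = 1} = ∅ := by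
  have hcont : Continuous fun z : TwoCircles => ‖z.1‖ :=
    continuous_norm.comp continuous_subtype_val
  have h1 : {z : TwoCircles | ‖z.1‖ = 1}
      = (fun z : TwoCircles => ‖z.1‖) ⁻¹' (Iio (3 / 2)) := by
    ext z
    simp only [mem_setOf_eq, mem_preimage, mem_Iio]
    constructor
    · intro h; rw [h]; norm_num
    · intro h
      rcases z.2 with h1 | h2
      · exact h1
      · exfalso; rw [h2] at h; norm_num at h
  have h2 : {z : TwoCircles | ‖z.1‖ = 1}
      = (fun z : TwoCircles => ‖z.1‖) ⁻¹' (Iic (3 / 2)) := by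
    ext z
    simp only [mem_setOf_eq, mem_preimage, mem_Iic]
    constructor
    · intro h; rw [h]; norm_num
    · intro h
      rcases z.2 with h1 | h2
      · exact h1
      · exfalso; rw [h2] at h; norm_num at h
  have hopen : IsOpen {z : TwoCircles | ‖z.1‖ = 1} := by
    rw [h1]; exact isOpen_Iio.preimage hcont
  have hclosed : IsClosed {z : TwoCircles | ‖z.1‖ = 1} := by
    rw [h2]; exact isClosed_Iic.preimage hcont
  rw [frontier, hclosed.closure_eq, hopen.interior_eq, diff_self]

lemma continuous_F1 (α : ℝ) : Continuous (F1 α) := by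
  have hval : Continuous fun z : TwoCircles => (F1 α z).1 := by
    have heq : (fun z : TwoCircles => (F1 α z).1)
        = fun z : TwoCircles => if ‖z.1‖ = 1 then
            2 * z.1 * Complex.exp ((α : ℂ) * Complex.I)
          else z.1 / 2 * Complex.exp (((2 * α : ℝ) : ℂ) * Complex.I) := by
      funext z
      simp only [F1]
      split_ifs <;> rfl
    rw [heq]
    refine Continuous.if ?_ ?_ ?_
    · intro a ha
      rw [frontier_unit_empty] at ha
      exact absurd ha (notMem_empty a)
    · exact (continuous_const.mul continuous_subtype_val).mul continuous_const
    · exact (continuous_subtype_val.div_const _).mul continuous_const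
  exact hval.subtype_mk fun z => (F1 α z).2

lemma continuous_F2 (α : ℝ) : Continuous (F2 α) := by
  have hval : Continuous fun z : TwoCircles => (F2 α z).1 := by
    have heq : (fun z : TwoCircles => (F2 α z).1)
        = fun z : TwoCircles => if ‖z.1‖ = 1 then
            2 * z.1 * Complex.exp (((2 * α : ℝ) : ℂ) * Complex.I)
          else z.1 / 2 * Complex.exp ((α : ℂ) * Complex.I) := by
      funext z
      simp only [F2]
      split_ifs <;> rfl
    rw [heq]
    refine Continuous.if ?_ ?_ ?_
    · intro a ha
      rw [frontier_unit_empty] at ha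
      exact absurd ha (notMem_empty a)
    · exact (continuous_const.mul continuous_subtype_val).mul continuous_const
    · exact (continuous_subtype_val.div_const _).mul continuous_const
  exact hval.subtype_mk fun z => (F2 α z).2

theorem twoCircles_nonautonomous_minimal_autonomous_not
    (α : ℝ) (hα : Irrational (α / (2 * Real.pi))) :
    Continuous (F1 α) ∧ Continuous (F2 α) ∧
    (∀ x : TwoCircles, Dense (Set.range fun n : ℕ => omegaIt ![F1 α, F2 α] n x)) ∧
    ¬ (∀ x : TwoCircles, Dense (Set.range fun n : ℕ => (F2 α ∘ F1 α)^[n] x)) := by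
  have h2 : Irrational (2 * α / (2 * Real.pi)) := by
    have := hα.ratCast_mul (q := 2) (by norm_num)
    convert this using 1
    push_cast
    ring
  have h4 : Irrational (4 * α / (2 * Real.pi)) := by
    have := hα.ratCast_mul (q := 4) (by norm_num)
    convert this using 1
    push_cast
    ring
  refine ⟨continuous_F1 α, continuous_F2 α, ?_, ?_⟩
  · -- minimality of the non-autonomous system
    intro x
    rw [Metric.dense_iff]
    intro y ε hε
    have hx0 : x.1 ≠ 0 := by
      intro h
      rcases x.2 with h1 | h1 <;> rw [h, norm_zero] at h1 <;> norm_num at h1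
    rcases x.2 with hx | hx
    · rcases y.2 with hy | hy
      · -- |x| = 1, |y| = 1 : even times
        obtain ⟨m, hm⟩ := reach (2 * α) h2 x.1 y.1 (by rw [hx, hy]) hx0 hε
        refine ⟨omegaIt ![F1 α, F2 α] (2 * m) x, ?_, ⟨2 * m, rfl⟩⟩
        rw [Metric.mem_ball, Subtype.dist_eq, Complex.dist_eq, omega_even_one x hx m]
        exact hm
      · -- |x| = 1, |y| = 2 : odd times
        set c : ℂ := 2 * x.1 * Complex.exp ((α : ℂ) * Complex.I) with hc
        have habs : ‖c‖ = ‖y.1‖ := by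
          rw [hc, hy]
          simp [map_mul, Complex.norm_exp_ofReal_mul_I, Complex.norm_exp, hx]
        have hc0 : c ≠ 0 :=
          mul_ne_zero (mul_ne_zero two_ne_zero hx0) (Complex.exp_ne_zero _)
        obtain ⟨m, hm⟩ := reach (2 * α) h2 c y.1 habs hc0 hε
        refine ⟨omegaIt ![F1 α, F2 α] (2 * m + 1) x, ?_, ⟨2 * m + 1, rfl⟩⟩
        have habs2 : ‖(omegaIt ![F1 α, F2 α] (2 * m) x).1‖ = 1 := by
          rw [omega_even_one x hx m]
          simp [map_mul, map_pow, Complex.norm_exp_ofReal_mul_I, abs_exp_two, abs_exp_four, hx]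
        rw [Metric.mem_ball, Subtype.dist_eq, Complex.dist_eq, omega_odd,
          F1_val_one _ habs2, omega_even_one x hx m]
        have : 2 * (x.1 * Complex.exp (((2 * α : ℝ) : ℂ) * Complex.I) ^ m)
            * Complex.exp ((α : ℂ) * Complex.I)
            = c * Complex.exp (((2 * α : ℝ) : ℂ) * Complex.I) ^ m := by
          rw [hc]; ring
        rw [this]
        exact hm
    · rcases y.2 with hy | hy
      · -- |x| = 2, |y| = 1 : odd times
        set c : ℂ := x.1 / 2 * Complex.exp (((2 * α : ℝ) : ℂ) * Complex.I) with hc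
        have habs : ‖c‖ = ‖y.1‖ := by
          rw [hc, hy]
          simp [map_mul, map_div₀, Complex.norm_exp_ofReal_mul_I, Complex.norm_exp, hx]
        have hc0 : c ≠ 0 :=
          mul_ne_zero (div_ne_zero hx0 two_ne_zero) (Complex.exp_ne_zero _)
        obtain ⟨m, hm⟩ := reach (4 * α) h4 c y.1 habs hc0 hε
        refine ⟨omegaIt ![F1 α, F2 α] (2 * m + 1) x, ?_, ⟨2 * m + 1, rfl⟩⟩
        have habs2 : ‖(omegaIt ![F1 α, F2 α] (2 * m) x).1‖ = 2 := by
          rw [omega_even_two x hx m]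
          simp [map_mul, map_pow, Complex.norm_exp_ofReal_mul_I, abs_exp_two, abs_exp_four, hx]
        rw [Metric.mem_ball, Subtype.dist_eq, Complex.dist_eq, omega_odd,
          F1_val_two _ habs2, omega_even_two x hx m]
        have : x.1 * Complex.exp (((4 * α : ℝ) : ℂ) * Complex.I) ^ m / 2
            * Complex.exp (((2 * α : ℝ) : ℂ) * Complex.I)
            = c * Complex.exp (((4 * α : ℝ) : ℂ) * Complex.I) ^ m := by
          rw [hc]; ring
        rw [this]
        exact hm
      · -- |x| = 2, |y| = 2 : even times
        obtain ⟨m, hm⟩ := reach (4 * α) h4 x.1 y.1 (by rw [hx, hy]) hx0 hε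
        refine ⟨omegaIt ![F1 α, F2 α] (2 * m) x, ?_, ⟨2 * m, rfl⟩⟩
        rw [Metric.mem_ball, Subtype.dist_eq, Complex.dist_eq, omega_even_two x hx m]
        exact hm
  · -- non-minimality of the autonomous system
    intro hmin
    set x0 : TwoCircles := ⟨(1 : ℂ), Or.inl (by simp)⟩ with hx0
    have horb : ∀ n, ‖(((F2 α ∘ F1 α)^[n] x0).1)‖ = 1 := by
      intro n
      induction n with
      | zero => simp [hx0]
      | succ n ih =>
        rw [Function.iterate_succ_apply']
        show ‖((F2 α (F1 α _)).1)‖ = 1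
        rw [comp_val_one _ ih]
        simp [map_mul, Complex.norm_exp_ofReal_mul_I, abs_exp_two, ih]
    have hy0 : ((2 : ℂ)) ∈ TwoCircles := Or.inr (by simp)
    obtain ⟨w, hw, n, rfl⟩ :=
      Metric.dense_iff.mp (hmin x0) ⟨(2 : ℂ), hy0⟩ 1 one_pos
    rw [Metric.mem_ball, Subtype.dist_eq, Complex.dist_eq] at hw
    have h1 : (1 : ℝ) ≤ ‖(((F2 α ∘ F1 α)^[n] x0).1 - 2)‖ := by
      have hn := horb n
      have hkey : ((F2 α ∘ F1 α)^[n] x0).1 - 2 = -((2 : ℂ) - ((F2 α ∘ F1 α)^[n] x0).1) := by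
        ring
      rw [hkey, norm_neg]
      have h5 := norm_sub_norm_le (2 : ℂ) (((F2 α ∘ F1 α)^[n] x0).1)
      rw [hn] at h5
      have h6 : ‖(2 : ℂ)‖ = 2 := by simp
      rw [h6] at h5
      linarith
    linarith
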